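/- Let G = diag(ε_1,…,ε_n) with each ε_i ∈ {1, −1}, and write G_1 = G ⊗ 1, G_2 = 1 ⊗ G in (End ℂ^n)^{⊗2}. Then for all u, v (with u ≠ ±v), R(u−v) G_1 R(u+v) G_2 = G_2 R(u+v) G_1 R(u−v). -/
import Mathlib


/-!
Formalization of a statement from "Representations of reflection algebras"
by A. I. Molev and E. Ragoucy.

The reflection algebra `B(n,l)` (and its variants) is presented by generators
`b_{ij}^{(r)}` and relations obtained by equating coefficients of the matrix
reflection equation `R(u-v)B₁(u)R(u+v)B₂(v) = B₂(v)R(u+v)B₁(u)R(u-v)`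
(denominators cleared by the injective multiplication by `u⁻¹v⁻¹(u-v)` and
`u⁻¹v⁻¹(u+v)`), together with (for `B(n,l)`) the unitarity condition
`B(u)B(-u) = 1`.  Series in `u⁻¹, v⁻¹` are modelled as (multivariate) formal
power series, `x = u⁻¹` being variable `0` and `y = v⁻¹` variable `1`.
-/

noncomputable section
open scoped BigOperators

namespace RefAlg

/-- The permutation operator `P` on `ℂⁿ ⊗ ℂⁿ`. -/
def Pc (n : ℕ) : Matrix (Fin n × Fin n) (Fin n × Fin n) ℂ :=
  Matrix.of fun p q => if q = (p.2, p.1) then 1 else 0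

/-- The Yang `R`-matrix `R(u) = 1 - P u⁻¹`. -/
def Rc (n : ℕ) (u : ℂ) : Matrix (Fin n × Fin n) (Fin n × Fin n) ℂ :=
  1 - u⁻¹ • Pc n

/-- `G ⊗ 1`. -/
def G1c (n : ℕ) (ε : Fin n → ℂ) : Matrix (Fin n × Fin n) (Fin n × Fin n) ℂ :=
  Matrix.of fun p q => if p = q then ε p.1 else 0

/-- `1 ⊗ G`. -/
def G2c (n : ℕ) (ε : Fin n → ℂ) : Matrix (Fin n × Fin n) (Fin n × Fin n) ℂ :=
  Matrix.of fun p q => if p = q then ε p.2 else 0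

lemma G1c_eq (n : ℕ) (ε : Fin n → ℂ) :
    G1c n ε = Matrix.diagonal (fun p : Fin n × Fin n => ε p.1) := rfl

lemma G2c_eq (n : ℕ) (ε : Fin n → ℂ) :
    G2c n ε = Matrix.diagonal (fun p : Fin n × Fin n => ε p.2) := rfl

lemma hPP (n : ℕ) : Pc n * Pc n = 1 := by
  ext p q
  simp only [Pc, Matrix.mul_apply, Matrix.of_apply, ite_mul, one_mul, zero_mul,
    Finset.sum_ite_eq', Finset.mem_univ, if_true, Matrix.one_apply]
  simp [eq_comm]

lemma hPA (n : ℕ) (ε : Fin n → ℂ) : Pc n * G1c n ε = G2c n ε * Pc n := by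
  rw [G1c_eq, G2c_eq]
  ext p q
  rw [Matrix.mul_diagonal, Matrix.diagonal_mul]
  simp only [Pc, Matrix.of_apply]
  split_ifs with h
  · subst h; ring
  · ring

lemma hPB (n : ℕ) (ε : Fin n → ℂ) : Pc n * G2c n ε = G1c n ε * Pc n := by
  rw [G1c_eq, G2c_eq]
  ext p q
  rw [Matrix.mul_diagonal, Matrix.diagonal_mul]
  simp only [Pc, Matrix.of_apply]
  split_ifs with h
  · subst h; ring
  · ring

lemma hAA (n : ℕ) (ε : Fin n → ℂ) (hε : ∀ i, ε i = 1 ∨ ε i = -1) :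
    G1c n ε * G1c n ε = 1 := by
  rw [G1c_eq, Matrix.diagonal_mul_diagonal]
  have : (fun p : Fin n × Fin n => ε p.1 * ε p.1) = fun _ => 1 := by
    funext p; rcases hε p.1 with h | h <;> rw [h] <;> ring
  rw [this, Matrix.diagonal_one]

lemma hBB (n : ℕ) (ε : Fin n → ℂ) (hε : ∀ i, ε i = 1 ∨ ε i = -1) :
    G2c n ε * G2c n ε = 1 := by
  rw [G2c_eq, Matrix.diagonal_mul_diagonal]
  have : (fun p : Fin n × Fin n => ε p.2 * ε p.2) = fun _ => 1 := by
    funext p; rcases hε p.2 with h | h <;> rw [h] <;> ring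
  rw [this, Matrix.diagonal_one]

lemma hAB (n : ℕ) (ε : Fin n → ℂ) : G1c n ε * G2c n ε = G2c n ε * G1c n ε := by
  rw [G1c_eq, G2c_eq, Matrix.diagonal_mul_diagonal, Matrix.diagonal_mul_diagonal]
  rw [show (fun i : Fin n × Fin n => ε i.1 * ε i.2) = fun i => ε i.2 * ε i.1 from
    funext fun i => mul_comm _ _]

/-- For `G = diag(ε₁,…,ε_n)` with `ε_i ∈ {1, -1}` and `u ≠ ±v`,
`R(u-v) G₁ R(u+v) G₂ = G₂ R(u+v) G₁ R(u-v)`. -/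
theorem statement5 (n : ℕ) (hn : 1 ≤ n) (ε : Fin n → ℂ)
    (hε : ∀ i, ε i = 1 ∨ ε i = -1) (u v : ℂ) (huv : u ≠ v) (huv' : u ≠ -v) :
    Rc n (u - v) * G1c n ε * Rc n (u + v) * G2c n ε =
      G2c n ε * Rc n (u + v) * G1c n ε * Rc n (u - v) := by
  set P := Pc n
  set A := G1c n ε
  set B := G2c n ε
  set a := (u - v)⁻¹
  set b := (u + v)⁻¹
  have hpa : P * A = B * P := hPA n ε
  have hpb : P * B = A * P := hPB n ε
  have hpp : P * P = 1 := hPP n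
  have haa : A * A = 1 := hAA n ε hε
  have hbb : B * B = 1 := hBB n ε hε
  have hab : A * B = B * A := hAB n ε
  have l2 : A * (P * B) = P := by rw [hpb, ← mul_assoc, haa, one_mul]
  have l3 : P * (A * B) = B * (A * P) := by
    rw [← mul_assoc, hpa, mul_assoc, hpb]
  have l5 : B * (P * A) = P := by rw [hpa, ← mul_assoc, hbb, one_mul]
  have l6 : B * (P * (A * P)) = 1 := by
    rw [← mul_assoc P A P, hpa, mul_assoc, hpp, mul_one, hbb]
  show (1 - a • P) * A * (1 - b • P) * B = B * (1 - b • P) * A * (1 - a • P)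
  simp only [mul_sub, sub_mul, one_mul, mul_one, Matrix.smul_mul, Matrix.mul_smul,
    mul_assoc]
  rw [l3, l5, l6, l2, hpp, hab, smul_smul, smul_smul, mul_comm a b]
  abel
end RefAlg
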